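/- For all real numbers s₁, q, r, λ, the characteristic polynomial of the 7×7 skew-symmetric matrix W = s₁F₁₇ + λq·F₁₆ + λr·F₂₆ + (λ−2)q·F₃₄ + (λ−2)r·F₃₅ equals z⁷ + (a + b(λ² + (2−λ)²))z⁵ + (ab(2−λ)² + acλ² + b²λ²(2−λ)²)z³ + abcλ²(2−λ)²·z, where a = s₁², b = q² + r², c = r². -/

import Mathlib

open Matrix Polynomial

/-- `F i j = E_{ij} - E_{ji}` (here `i j : Fin 7` are zero-based indices, while the
paper uses one-based indices: `F₁₇ = F 0 6`, etc.). -/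
def F (i j : Fin 7) : Matrix (Fin 7) (Fin 7) ℝ :=
  Matrix.single i j 1 - Matrix.single j i 1

private lemma cv_1_1 {α : Type*} (x : α) (u : Fin 1 → α) :
    Matrix.vecCons x u 1 = u 0 := rfl
private lemma cv_2_1 {α : Type*} (x : α) (u : Fin 2 → α) :
    Matrix.vecCons x u 1 = u 0 := rfl
private lemma cv_2_2 {α : Type*} (x : α) (u : Fin 2 → α) :
    Matrix.vecCons x u 2 = u 1 := rfl
private lemma cv_3_1 {α : Type*} (x : α) (u : Fin 3 → α) :
    Matrix.vecCons x u 1 = u 0 := rfl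
private lemma cv_3_2 {α : Type*} (x : α) (u : Fin 3 → α) :
    Matrix.vecCons x u 2 = u 1 := rfl
private lemma cv_3_3 {α : Type*} (x : α) (u : Fin 3 → α) :
    Matrix.vecCons x u 3 = u 2 := rfl
private lemma cv_4_1 {α : Type*} (x : α) (u : Fin 4 → α) :
    Matrix.vecCons x u 1 = u 0 := rfl
private lemma cv_4_2 {α : Type*} (x : α) (u : Fin 4 → α) :
    Matrix.vecCons x u 2 = u 1 := rfl
private lemma cv_4_3 {α : Type*} (x : α) (u : Fin 4 → α) :
    Matrix.vecCons x u 3 = u 2 := rfl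
private lemma cv_4_4 {α : Type*} (x : α) (u : Fin 4 → α) :
    Matrix.vecCons x u 4 = u 3 := rfl
private lemma cv_5_1 {α : Type*} (x : α) (u : Fin 5 → α) :
    Matrix.vecCons x u 1 = u 0 := rfl
private lemma cv_5_2 {α : Type*} (x : α) (u : Fin 5 → α) :
    Matrix.vecCons x u 2 = u 1 := rfl
private lemma cv_5_3 {α : Type*} (x : α) (u : Fin 5 → α) :
    Matrix.vecCons x u 3 = u 2 := rfl
private lemma cv_5_4 {α : Type*} (x : α) (u : Fin 5 → α) :
    Matrix.vecCons x u 4 = u 3 := rfl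
private lemma cv_5_5 {α : Type*} (x : α) (u : Fin 5 → α) :
    Matrix.vecCons x u 5 = u 4 := rfl
private lemma cv_6_1 {α : Type*} (x : α) (u : Fin 6 → α) :
    Matrix.vecCons x u 1 = u 0 := rfl
private lemma cv_6_2 {α : Type*} (x : α) (u : Fin 6 → α) :
    Matrix.vecCons x u 2 = u 1 := rfl
private lemma cv_6_3 {α : Type*} (x : α) (u : Fin 6 → α) :
    Matrix.vecCons x u 3 = u 2 := rfl
private lemma cv_6_4 {α : Type*} (x : α) (u : Fin 6 → α) :
    Matrix.vecCons x u 4 = u 3 := rfl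
private lemma cv_6_5 {α : Type*} (x : α) (u : Fin 6 → α) :
    Matrix.vecCons x u 5 = u 4 := rfl
private lemma cv_6_6 {α : Type*} (x : α) (u : Fin 6 → α) :
    Matrix.vecCons x u 6 = u 5 := rfl

set_option maxHeartbeats 4000000 in
set_option maxRecDepth 4000 in
/-- the characteristic polynomial of
`W = s₁F₁₇ + λq·F₁₆ + λr·F₂₆ + (λ−2)q·F₃₄ + (λ−2)r·F₃₅` (Lemma `vspom4` of the paper). -/
theorem stmt_4 (s₁ q r lam a b c : ℝ)
    (ha : a = s₁ ^ 2) (hb : b = q ^ 2 + r ^ 2) (hc : c = r ^ 2)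
    (W : Matrix (Fin 7) (Fin 7) ℝ)
    (hW : W = s₁ • F 0 6 + (lam * q) • F 0 5 + (lam * r) • F 1 5 +
        ((lam - 2) * q) • F 2 3 + ((lam - 2) * r) • F 2 4) :
    W.charpoly =
      X ^ 7 + C (a + b * (lam ^ 2 + (2 - lam) ^ 2)) * X ^ 5 +
        C (a * b * (2 - lam) ^ 2 + a * c * lam ^ 2 + b ^ 2 * lam ^ 2 * (2 - lam) ^ 2) * X ^ 3 +
        C (a * b * c * lam ^ 2 * (2 - lam) ^ 2) * X := by
  subst ha hb hc
  have hW' : W = !![0,0,0,0,0,lam*q,s₁; 0,0,0,0,0,lam*r,0; 0,0,0,(lam-2)*q,(lam-2)*r,0,0;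
      0,0,-((lam-2)*q),0,0,0,0; 0,0,-((lam-2)*r),0,0,0,0;
      -(lam*q),-(lam*r),0,0,0,0,0; -s₁,0,0,0,0,0,0] := by
    subst hW
    ext i j
    fin_cases i <;> fin_cases j <;>
      simp (config := { decide := true }) [F, Matrix.single, Matrix.smul_apply,
        Matrix.vecHead, Matrix.vecTail] <;>
      (try norm_num [Matrix.cons_val_zero, cv_1_1, cv_2_1, cv_2_2, cv_3_1, cv_3_2, cv_3_3, cv_4_1, cv_4_2, cv_4_3, cv_4_4, cv_5_1, cv_5_2, cv_5_3, cv_5_4, cv_5_5, cv_6_1, cv_6_2, cv_6_3, cv_6_4, cv_6_5, cv_6_6]) <;>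
      (try rfl) <;> (try ring)
  have hcm : charmatrix W = !![X, 0,0,0,0,-C (lam*q),-C s₁;
      0,X,0,0,0,-C (lam*r),0;
      0,0,X,-C ((lam-2)*q),-C ((lam-2)*r),0,0;
      0,0,C ((lam-2)*q),X,0,0,0;
      0,0,C ((lam-2)*r),0,X,0,0;
      C (lam*q),C (lam*r),0,0,0,X,0;
      C s₁,0,0,0,0,0,X] := by
    rw [hW']
    ext i j
    fin_cases i <;> fin_cases j <;>
      simp (config := { decide := true }) [charmatrix_apply, Matrix.one_apply, map_neg,
        Matrix.vecHead, Matrix.vecTail] <;>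
      (try norm_num [Matrix.cons_val_zero, cv_1_1, cv_2_1, cv_2_2, cv_3_1, cv_3_2, cv_3_3, cv_4_1, cv_4_2, cv_4_3, cv_4_4, cv_5_1, cv_5_2, cv_5_3, cv_5_4, cv_5_5, cv_6_1, cv_6_2, cv_6_3, cv_6_4, cv_6_5, cv_6_6]) <;>
      (try rfl) <;> (try ring) <;>
        (try (simp [Matrix.vecHead, Matrix.vecTail]))
  rw [Matrix.charpoly]
  set A : Matrix (Fin 3) (Fin 3) ℝ[X] :=
    !![X, -C ((lam-2)*q), -C ((lam-2)*r); C ((lam-2)*q), X, 0; C ((lam-2)*r), 0, X] with hA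
  set D : Matrix (Fin 4) (Fin 4) ℝ[X] :=
    !![X, 0, -C (lam*q), -C s₁; 0, X, -C (lam*r), 0;
       C (lam*q), C (lam*r), X, 0; C s₁, 0, 0, X] with hD
  have he : Function.LeftInverse
      (Sum.elim (![2,3,4] : Fin 3 → Fin 7) (![0,1,5,6] : Fin 4 → Fin 7))
      (![Sum.inr 0, Sum.inr 1, Sum.inl 0, Sum.inl 1, Sum.inl 2, Sum.inr 2, Sum.inr 3] :
        Fin 7 → Fin 3 ⊕ Fin 4) := by decide
  have he' : Function.RightInverse
      (Sum.elim (![2,3,4] : Fin 3 → Fin 7) (![0,1,5,6] : Fin 4 → Fin 7))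
      (![Sum.inr 0, Sum.inr 1, Sum.inl 0, Sum.inl 1, Sum.inl 2, Sum.inr 2, Sum.inr 3] :
        Fin 7 → Fin 3 ⊕ Fin 4) := by decide
  let e : Fin 3 ⊕ Fin 4 ≃ Fin 7 :=
    ⟨Sum.elim ![2,3,4] ![0,1,5,6], ![Sum.inr 0, Sum.inr 1, Sum.inl 0, Sum.inl 1, Sum.inl 2,
      Sum.inr 2, Sum.inr 3], he', he⟩
  rw [← Matrix.det_submatrix_equiv_self e (charmatrix W)]
  have hsub : (charmatrix W).submatrix e e = Matrix.fromBlocks A 0 0 D := by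
    rw [hcm]
    ext i j
    rcases i with i | i <;> rcases j with j | j <;> fin_cases i <;> fin_cases j <;> rfl
  rw [hsub, Matrix.det_fromBlocks_zero₂₁]
  have hdA : A.det = X ^ 3 + (C ((lam-2)*q) ^ 2 + C ((lam-2)*r) ^ 2) * X := by
    rw [hA, Matrix.det_fin_three]
    simp
    ring
  have hdD : D.det = X ^ 4 + (C s₁ ^ 2 + C (lam*q) ^ 2 + C (lam*r) ^ 2) * X ^ 2 +
      C s₁ ^ 2 * C (lam*r) ^ 2 := by
    rw [hD]
    simp (config := { decide := true }) [Matrix.det_succ_row_zero, Fin.sum_univ_succ,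
      Fin.succAbove, Fin.castSucc, Fin.castAdd, Fin.castLE, Fin.succ,
      Matrix.cons_val_zero, cv_1_1, cv_2_1, cv_2_2, cv_3_1, cv_3_2, cv_3_3, cv_4_1, cv_4_2, cv_4_3, cv_4_4, cv_5_1, cv_5_2, cv_5_3, cv_5_4, cv_5_5, cv_6_1, cv_6_2, cv_6_3, cv_6_4, cv_6_5, cv_6_6]
    ring
  rw [hdA, hdD]
  simp only [_root_.map_add, _root_.map_mul, _root_.map_sub, _root_.map_pow, map_ofNat,
    _root_.map_zero, _root_.map_one, Polynomial.C_neg]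
  ring
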